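/- Let Q ∈ R^{D×K} have singular value decomposition Q = U Σ V^T with Σ = diag(σ_1,...,σ_r), and let η > 0. Then the singular value thresholding operator W* = U·diag({σ_i − η}_+)·V^T is the unique minimizer of the function W ↦ (1/2)‖W − Q‖_F^2 + η‖W‖_* over R^{D×K}. -/

import Mathlib

open Finset Matrix

/-- The square root of a positive semidefinite matrix, as `Matrix.PosSemidef.sqrt` was defined
in Mathlib of December 2024 (that definition has since been removed). -/
noncomputable def Matrix.PosSemidef.sqrt {n 𝕜 : Type*} [Fintype n] [RCLike 𝕜] [PartialOrder 𝕜] [DecidableEq n]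
    {A : Matrix n n 𝕜} (hA : A.PosSemidef) : Matrix n n 𝕜 :=
  hA.1.eigenvectorUnitary.1 * diagonal ((↑) ∘ (fun x => Real.sqrt x) ∘ hA.1.eigenvalues) *
    (star hA.1.eigenvectorUnitary : Matrix n n 𝕜)

/-- The nuclear (trace) norm of a real matrix: the trace of `√(WᵀW)`. -/
noncomputable def nuclearNorm {D K : ℕ} (W : Matrix (Fin D) (Fin K) ℝ) : ℝ :=
  Matrix.trace (Matrix.PosSemidef.sqrt (Matrix.posSemidef_conjTranspose_mul_self W))

open scoped MatrixOrder in
lemma psd_eq_sqrt_of_sq_eq {K : ℕ} {S A : Matrix (Fin K) (Fin K) ℝ} (hS : S.PosSemidef)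
    (hA : A.PosSemidef) (h : S ^ 2 = A) : S = hA.sqrt := by
  have e : hA.sqrt = CFC.sqrt A := by
    rw [CFC.sqrt_eq_cfc, cfc_nnreal_eq_real _ A, hA.1.cfc_eq]
    simp only [IsHermitian.cfc, Unitary.conjStarAlgAut_apply]
    rw [Matrix.PosSemidef.sqrt]
    congr 1; congr 1; congr 1; funext x
    simp [Real.coe_sqrt]
    exact congrArg Real.sqrt (max_eq_left (hA.eigenvalues_nonneg x)).symm
  rw [e, eq_comm]
  exact CFC.sqrt_unique (by rw [← sq]; exact h) hS.nonneg

lemma trace_transpose_mul_eq {D K : ℕ} (A B : Matrix (Fin D) (Fin K) ℝ) :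
    Matrix.trace (Aᵀ * B) = ∑ j, ∑ k, A j k * B j k := by
  rw [Matrix.trace]
  simp [Matrix.diag, Matrix.mul_apply]
  rw [Finset.sum_comm]

lemma nuclearNorm_UDV {D K r : ℕ} (U : Matrix (Fin D) (Fin r) ℝ)
    (V : Matrix (Fin K) (Fin r) ℝ) (d : Fin r → ℝ)
    (hU : Uᵀ * U = 1) (hV : Vᵀ * V = 1) (hd : ∀ i, 0 ≤ d i) :
    nuclearNorm (U * Matrix.diagonal d * Vᵀ) = ∑ i, d i := by
  set W := U * Matrix.diagonal d * Vᵀ with hWdef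
  have hS : Matrix.PosSemidef (V * Matrix.diagonal d * Vᴴ) :=
    (Matrix.posSemidef_diagonal_iff.mpr hd).mul_mul_conjTranspose_same V
  have hVH : (Vᴴ : Matrix (Fin r) (Fin K) ℝ) = Vᵀ :=
    Matrix.conjTranspose_eq_transpose_of_trivial V
  have hVV : ∀ (M : Matrix (Fin r) (Fin K) ℝ), Vᵀ * (V * M) = M := fun M => by
    rw [← Matrix.mul_assoc, hV, Matrix.one_mul]
  have hUU : ∀ (M : Matrix (Fin r) (Fin K) ℝ), Uᵀ * (U * M) = M := fun M => by
    rw [← Matrix.mul_assoc, hU, Matrix.one_mul]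
  have hWH : Wᴴ = V * Matrix.diagonal d * Uᵀ := by
    rw [Matrix.conjTranspose_eq_transpose_of_trivial, hWdef,
      Matrix.transpose_mul, Matrix.transpose_mul, Matrix.transpose_transpose,
      Matrix.diagonal_transpose, Matrix.mul_assoc]
  have hsq : (V * Matrix.diagonal d * Vᴴ) ^ 2 = Wᴴ * W := by
    rw [hWH, hVH, pow_two, hWdef]
    simp only [Matrix.mul_assoc]
    rw [hVV, hUU]
  have := psd_eq_sqrt_of_sq_eq hS (Matrix.posSemidef_conjTranspose_mul_self W) hsq
  rw [nuclearNorm, ← this, hVH, Matrix.trace_mul_cycle, hV, one_mul,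
    Matrix.trace_diagonal]

lemma nuclear_duality {D K : ℕ} (G W : Matrix (Fin D) (Fin K) ℝ)
    (hG : ∀ v : Fin K → ℝ, (G *ᵥ v) ⬝ᵥ (G *ᵥ v) ≤ v ⬝ᵥ v) :
    ∑ j, ∑ k, G j k * W j k ≤ nuclearNorm W := by
  have hH := Matrix.posSemidef_conjTranspose_mul_self W
  set C : Matrix (Fin K) (Fin K) ℝ := (hH.1.eigenvectorUnitary : Matrix (Fin K) (Fin K) ℝ)
    with hCdef
  set lam : Fin K → ℝ := hH.1.eigenvalues with hlam
  have hCu : C ∈ Matrix.unitaryGroup (Fin K) ℝ := hH.1.eigenvectorUnitary.2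
  have hC1 : C * Cᵀ = 1 := by
    have := (Matrix.mem_unitaryGroup_iff).mp hCu
    rwa [Matrix.star_eq_conjTranspose, Matrix.conjTranspose_eq_transpose_of_trivial] at this
  have hC1' : Cᵀ * C = 1 := by
    have := (Matrix.mem_unitaryGroup_iff').mp hCu
    rwa [Matrix.star_eq_conjTranspose, Matrix.conjTranspose_eq_transpose_of_trivial] at this
  have hdiag : Cᵀ * (Wᴴ * W) * C = Matrix.diagonal lam := by
    have := hH.1.conjStarAlgAut_star_eigenvectorUnitary
    rw [Unitary.conjStarAlgAut_star_apply] at this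
    rw [Matrix.star_eq_conjTranspose, Matrix.conjTranspose_eq_transpose_of_trivial,
      RCLike.ofReal_real_eq_id] at this
    simp at this
    exact this
  -- nuclearNorm W = sum of sqrt of eigenvalues
  have hnn : nuclearNorm W = ∑ i, Real.sqrt (lam i) := by
    rw [nuclearNorm, Matrix.PosSemidef.sqrt, Matrix.trace_mul_cycle,
      Matrix.star_eq_conjTranspose, Matrix.conjTranspose_eq_transpose_of_trivial]
    rw [← hCdef, hC1', Matrix.one_mul, Matrix.trace_diagonal]
    simp [RCLike.ofReal_real_eq_id]
    rfl
  set M : Matrix (Fin D) (Fin K) ℝ := W * C with hM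
  set N : Matrix (Fin D) (Fin K) ℝ := G * C with hN
  have hMcol : ∀ i, ∑ j, (M j i) ^ 2 = lam i := by
    intro i
    have h1 : (Mᵀ * M) i i = lam i := by
      rw [hM, Matrix.transpose_mul, ← Matrix.mul_assoc, Matrix.mul_assoc (Cᵀ)]
      have hWH : (Wᴴ : Matrix (Fin K) (Fin D) ℝ) = Wᵀ :=
        Matrix.conjTranspose_eq_transpose_of_trivial W
      rw [← hWH] at *
      rw [show Cᵀ * (Wᴴ * W) * C = Matrix.diagonal lam from hdiag]
      simp
    rw [← h1, Matrix.mul_apply]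
    congr 1; ext j; rw [Matrix.transpose_apply]; ring
  have hNcol : ∀ i, ∑ j, (N j i) ^ 2 ≤ 1 := by
    intro i
    have hv : ∀ j, N j i = (G *ᵥ fun k => C k i) j := by
      intro j; rw [hN, Matrix.mul_apply, Matrix.mulVec]; rfl
    have h2 : ∑ j, (N j i) ^ 2 = (G *ᵥ fun k => C k i) ⬝ᵥ (G *ᵥ fun k => C k i) := by
      rw [dotProduct]
      exact Finset.sum_congr rfl fun j _ => by rw [hv j]; ring
    have h3 : (fun k => C k i) ⬝ᵥ (fun k => C k i) = 1 := by
      have : (Cᵀ * C) i i = (1 : Matrix (Fin K) (Fin K) ℝ) i i := by rw [hC1']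
      rw [Matrix.one_apply_eq] at this
      rw [dotProduct, ← this, Matrix.mul_apply]
      exact Finset.sum_congr rfl fun j _ => by rw [Matrix.transpose_apply]
    calc ∑ j, (N j i) ^ 2 = _ := h2
      _ ≤ (fun k => C k i) ⬝ᵥ (fun k => C k i) := hG _
      _ = 1 := h3
  -- main chain
  have htr : ∑ j, ∑ k, G j k * W j k = ∑ i, ∑ j, N j i * M j i := by
    rw [← trace_transpose_mul_eq G W]
    have : Nᵀ * M = Cᵀ * (Gᵀ * W) * C := by
      rw [hN, hM, Matrix.transpose_mul, Matrix.mul_assoc, Matrix.mul_assoc, Matrix.mul_assoc]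
    have h4 : Matrix.trace (Nᵀ * M) = Matrix.trace (Gᵀ * W) := by
      rw [this, Matrix.trace_mul_cycle, ← Matrix.mul_assoc, hC1, Matrix.one_mul]
    rw [← h4, trace_transpose_mul_eq N M]
    exact Finset.sum_comm
  rw [htr, hnn]
  apply Finset.sum_le_sum
  intro i _
  calc ∑ j, N j i * M j i
      ≤ Real.sqrt (∑ j, (N j i) ^ 2) * Real.sqrt (∑ j, (M j i) ^ 2) :=
        Real.sum_mul_le_sqrt_mul_sqrt _ _ _
    _ ≤ 1 * Real.sqrt (lam i) := by
        rw [hMcol i]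
        apply mul_le_mul_of_nonneg_right _ (Real.sqrt_nonneg _)
        calc Real.sqrt (∑ j, (N j i) ^ 2) ≤ Real.sqrt 1 := Real.sqrt_le_sqrt (hNcol i)
          _ = 1 := Real.sqrt_one
    _ = Real.sqrt (lam i) := one_mul _

/-- Singular value thresholding is the proximal operator of the nuclear norm
(Theorem 2.1 of Cai, Candès, Shen 2010). -/
theorem singular_value_thresholding
    (D K r : ℕ) (η : ℝ) (hη : 0 < η)
    (U : Matrix (Fin D) (Fin r) ℝ) (V : Matrix (Fin K) (Fin r) ℝ) (σ : Fin r → ℝ)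
    (hU : Uᵀ * U = 1) (hV : Vᵀ * V = 1) (hσ : ∀ i, 0 < σ i)
    (Q : Matrix (Fin D) (Fin K) ℝ) (hQ : Q = U * Matrix.diagonal σ * Vᵀ)
    (Wstar : Matrix (Fin D) (Fin K) ℝ)
    (hW : Wstar = U * Matrix.diagonal (fun i => max (σ i - η) 0) * Vᵀ) :
    (∀ W : Matrix (Fin D) (Fin K) ℝ,
      (1/2 : ℝ) * (∑ j, ∑ k, (Wstar j k - Q j k)^2) + η * nuclearNorm Wstar ≤
      (1/2 : ℝ) * (∑ j, ∑ k, (W j k - Q j k)^2) + η * nuclearNorm W) ∧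
    (∀ W : Matrix (Fin D) (Fin K) ℝ,
      (1/2 : ℝ) * (∑ j, ∑ k, (W j k - Q j k)^2) + η * nuclearNorm W =
      (1/2 : ℝ) * (∑ j, ∑ k, (Wstar j k - Q j k)^2) + η * nuclearNorm Wstar →
      W = Wstar) := by
  set d : Fin r → ℝ := fun i => max (σ i - η) 0 with hd
  set c : Fin r → ℝ := fun i => min (σ i) η / η with hc
  set G : Matrix (Fin D) (Fin K) ℝ := U * Matrix.diagonal c * Vᵀ with hGdef
  have hd0 : ∀ i, 0 ≤ d i := fun i => le_max_right _ _
  have hc0 : ∀ i, 0 ≤ c i := fun i =>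
    div_nonneg (le_min (hσ i).le hη.le) hη.le
  have hc1 : ∀ i, c i ≤ 1 := fun i =>
    (div_le_one hη).mpr (min_le_right _ _)
  -- nuclear norm of Wstar
  have hnnW : nuclearNorm Wstar = ∑ i, d i := by
    rw [hW]; exact nuclearNorm_UDV U V d hU hV hd0
  -- Q - Wstar = η • G
  have hQmW : Q - Wstar = η • G := by
    have h1 : η • Matrix.diagonal c = Matrix.diagonal (fun i => min (σ i) η) := by
      ext i j
      rcases eq_or_ne i j with rfl | hij
      · simp only [Matrix.smul_apply, Matrix.diagonal_apply_eq, smul_eq_mul]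
        show η * (min (σ i) η / η) = min (σ i) η
        field_simp
      · simp [Matrix.diagonal_apply_ne _ hij]
    have h2 : (Matrix.diagonal σ - Matrix.diagonal d : Matrix (Fin r) (Fin r) ℝ)
        = Matrix.diagonal (fun i => min (σ i) η) := by
      ext i j
      rcases eq_or_ne i j with rfl | hij
      · simp only [Matrix.sub_apply, Matrix.diagonal_apply_eq]
        show σ i - max (σ i - η) 0 = min (σ i) η
        rcases le_total (σ i) η with h | h
        · rw [max_eq_right (by linarith), min_eq_left h, sub_zero]
        · rw [max_eq_left (by linarith), min_eq_right h]; ring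
      · simp [Matrix.diagonal_apply_ne _ hij]
    calc Q - Wstar = U * (Matrix.diagonal σ - Matrix.diagonal d) * Vᵀ := by
          rw [hQ, hW, Matrix.mul_sub, Matrix.sub_mul]
      _ = U * (η • Matrix.diagonal c) * Vᵀ := by rw [h2, h1]
      _ = η • G := by
          rw [hGdef, Matrix.mul_smul, Matrix.smul_mul]
  have hpt : ∀ j k, Wstar j k - Q j k = -(η * G j k) := by
    intro j k
    have := congrFun (congrFun hQmW j) k
    simp only [Matrix.sub_apply, Matrix.smul_apply, smul_eq_mul] at this
    linarith
  -- inner product of G with Wstar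
  have hUU : ∀ (M : Matrix (Fin r) (Fin K) ℝ), Uᵀ * (U * M) = M := fun M => by
    rw [← Matrix.mul_assoc, hU, Matrix.one_mul]
  have hGW : ∑ j, ∑ k, G j k * Wstar j k = ∑ i, d i := by
    rw [← trace_transpose_mul_eq, hGdef, hW]
    have hGT : (U * Matrix.diagonal c * Vᵀ)ᵀ = V * Matrix.diagonal c * Uᵀ := by
      rw [Matrix.transpose_mul, Matrix.transpose_mul, Matrix.transpose_transpose,
        Matrix.diagonal_transpose, Matrix.mul_assoc]
    rw [hGT]
    simp only [Matrix.mul_assoc]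
    rw [hUU (Matrix.diagonal d * Vᵀ), ← Matrix.mul_assoc (Matrix.diagonal c),
      Matrix.diagonal_mul_diagonal, ← Matrix.mul_assoc, Matrix.trace_mul_cycle, hV,
      Matrix.one_mul, Matrix.trace_diagonal]
    refine Finset.sum_congr rfl fun i _ => ?_
    rcases le_total (σ i) η with h | h
    · have hdi : d i = 0 := max_eq_right (by linarith)
      rw [hdi, mul_zero]
    · have hci : c i = 1 := by
        rw [hc]; show min (σ i) η / η = 1
        rw [min_eq_right h, div_self hη.ne']
      rw [hci, one_mul]
  -- isometry helpers
  have hiso : ∀ {m : ℕ} (A : Matrix (Fin m) (Fin r) ℝ), Aᵀ * A = 1 →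
      ∀ x : Fin r → ℝ, (A *ᵥ x) ⬝ᵥ (A *ᵥ x) = x ⬝ᵥ x := by
    intro m A hA x
    have h1 : x ⬝ᵥ ((Aᵀ * A) *ᵥ x) = x ⬝ᵥ x := by rw [hA, Matrix.one_mulVec]
    rw [← Matrix.mulVec_mulVec, Matrix.dotProduct_mulVec, Matrix.vecMul_transpose] at h1
    exact h1
  -- the operator norm bound on G
  have hGbound : ∀ v : Fin K → ℝ, (G *ᵥ v) ⬝ᵥ (G *ᵥ v) ≤ v ⬝ᵥ v := by
    intro v
    set u : Fin r → ℝ := Vᵀ *ᵥ v with hu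
    have hGv : G *ᵥ v = U *ᵥ (Matrix.diagonal c *ᵥ u) := by
      rw [hGdef, ← Matrix.mulVec_mulVec, ← Matrix.mulVec_mulVec]
    have step1 : (G *ᵥ v) ⬝ᵥ (G *ᵥ v) = (Matrix.diagonal c *ᵥ u) ⬝ᵥ (Matrix.diagonal c *ᵥ u) := by
      rw [hGv, hiso U hU]
    have step2 : (Matrix.diagonal c *ᵥ u) ⬝ᵥ (Matrix.diagonal c *ᵥ u) ≤ u ⬝ᵥ u := by
      rw [dotProduct, dotProduct]
      refine Finset.sum_le_sum fun i _ => ?_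
      rw [Matrix.mulVec_diagonal]
      have h1 : c i * u i * (c i * u i) = (c i)^2 * (u i * u i) := by ring
      rw [h1]
      have h2 : (c i)^2 ≤ 1 := by nlinarith [hc0 i, hc1 i]
      nlinarith [mul_self_nonneg (u i)]
    have step3 : u ⬝ᵥ u ≤ v ⬝ᵥ v := by
      have hVu : v ⬝ᵥ (V *ᵥ u) = u ⬝ᵥ u := by
        rw [Matrix.dotProduct_mulVec, ← Matrix.mulVec_transpose, ← hu]
      have hVuVu : (V *ᵥ u) ⬝ᵥ (V *ᵥ u) = u ⬝ᵥ u := hiso V hV u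
      have hnn : 0 ≤ (v - V *ᵥ u) ⬝ᵥ (v - V *ᵥ u) := by
        rw [dotProduct]
        exact Finset.sum_nonneg fun i _ => mul_self_nonneg _
      have hexp : (v - V *ᵥ u) ⬝ᵥ (v - V *ᵥ u)
          = v ⬝ᵥ v - v ⬝ᵥ (V *ᵥ u) - ((V *ᵥ u) ⬝ᵥ v - (V *ᵥ u) ⬝ᵥ (V *ᵥ u)) := by
        rw [sub_dotProduct, dotProduct_sub, dotProduct_sub]
      have hcomm : (V *ᵥ u) ⬝ᵥ v = v ⬝ᵥ (V *ᵥ u) := dotProduct_comm _ _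
      rw [hexp, hcomm, hVu, hVuVu] at hnn
      linarith
    calc (G *ᵥ v) ⬝ᵥ (G *ᵥ v) = _ := step1
      _ ≤ u ⬝ᵥ u := step2
      _ ≤ v ⬝ᵥ v := step3
  -- key inequality
  have key : ∀ W : Matrix (Fin D) (Fin K) ℝ,
      (1/2 : ℝ) * (∑ j, ∑ k, (Wstar j k - Q j k)^2) + η * nuclearNorm Wstar
        + (1/2 : ℝ) * (∑ j, ∑ k, (W j k - Wstar j k)^2)
      ≤ (1/2 : ℝ) * (∑ j, ∑ k, (W j k - Q j k)^2) + η * nuclearNorm W := by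
    intro W
    have hdual : ∑ j, ∑ k, G j k * W j k ≤ nuclearNorm W := nuclear_duality G W hGbound
    have hexp : (∑ j, ∑ k, (W j k - Q j k)^2)
        = (∑ j, ∑ k, (W j k - Wstar j k)^2)
          + ((∑ j, ∑ k, 2 * ((W j k - Wstar j k) * (Wstar j k - Q j k)))
          + (∑ j, ∑ k, (Wstar j k - Q j k)^2)) := by
      rw [← Finset.sum_add_distrib, ← Finset.sum_add_distrib]
      refine Finset.sum_congr rfl fun j _ => ?_
      rw [← Finset.sum_add_distrib, ← Finset.sum_add_distrib]
      exact Finset.sum_congr rfl fun k _ => by ring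
    have hcross : (∑ j, ∑ k, 2 * ((W j k - Wstar j k) * (Wstar j k - Q j k)))
        = 2 * η * (∑ j, ∑ k, G j k * Wstar j k) - 2 * η * (∑ j, ∑ k, G j k * W j k) := by
      rw [Finset.mul_sum, Finset.mul_sum, ← Finset.sum_sub_distrib]
      refine Finset.sum_congr rfl fun j _ => ?_
      rw [Finset.mul_sum, Finset.mul_sum, ← Finset.sum_sub_distrib]
      refine Finset.sum_congr rfl fun k _ => ?_
      rw [hpt j k]; ring
    have hdual' : η * (∑ j, ∑ k, G j k * W j k) ≤ η * nuclearNorm W :=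
      mul_le_mul_of_nonneg_left hdual hη.le
    rw [hexp, hcross, hGW, hnnW]
    linarith
  have hsq_nonneg : ∀ W : Matrix (Fin D) (Fin K) ℝ,
      (0:ℝ) ≤ ∑ j, ∑ k, (W j k - Wstar j k)^2 := fun W =>
    Finset.sum_nonneg fun j _ => Finset.sum_nonneg fun k _ => sq_nonneg _
  constructor
  · intro W
    have := key W
    have := hsq_nonneg W
    linarith
  · intro W heq
    have hk := key W
    rw [heq] at hk
    have hle : ∑ j, ∑ k, (W j k - Wstar j k)^2 ≤ 0 := by linarith
    have hzero : ∑ j, ∑ k, (W j k - Wstar j k)^2 = 0 := le_antisymm hle (hsq_nonneg W)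
    ext j k
    have h1 : ∀ j ∈ Finset.univ, (∑ k, (W j k - Wstar j k)^2) = 0 := by
      rw [← Finset.sum_eq_zero_iff_of_nonneg
        (fun j _ => Finset.sum_nonneg fun k _ => sq_nonneg _)]
      exact hzero
    have h2 := (Finset.sum_eq_zero_iff_of_nonneg (fun k _ => sq_nonneg (W j k - Wstar j k))).mp
      (h1 j (Finset.mem_univ j)) k (Finset.mem_univ k)
    have := sq_eq_zero_iff.mp h2
    linarith
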